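/- Let f : Δ → [0,1] be a finitely irreducible non-uniformly expanding Markov map such that at least one partition element Δ_b has nonempty interior. Then inf_{ω ∈ E*} diam( f^{|ω|}(Δ_ω) ) > 0, where |ω| denotes the length of the word ω; equivalently, inf_{a ∈ S} diam(f(Δ_a)) > 0. -/

import Mathlib

open Filter MeasureTheory Set

/-- A Markov map of the interval `[0,1]` with countably many branches indexed by `S`:
a family `{Δ_a}` of nonempty connected subsets of `[0,1]` with pairwise disjoint
interiors, a map `f` whose restriction to each `Δ_a` is a C¹ diffeomorphism onto its
image with bounded derivative (the branch derivative is `f' a`), mapping into `[0,1]`,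
and satisfying the Markov property: if `f(Δ_a) ∩ Δ_b` has nonempty interior then
`f(Δ_a) ⊇ Δ_b`. -/
structure MarkovMap (S : Type) where
  Δ : S → Set ℝ
  f : ℝ → ℝ
  f' : S → ℝ → ℝ
  nonempty : ∀ a, (Δ a).Nonempty
  subset_unit : ∀ a, Δ a ⊆ Set.Icc 0 1
  conn : ∀ a, IsPreconnected (Δ a)
  disj_int : Pairwise fun a b => interior (Δ a) ∩ interior (Δ b) = ∅
  maps_unit : ∀ a, Set.MapsTo f (Δ a) (Set.Icc 0 1)
  inj : ∀ a, Set.InjOn f (Δ a)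
  hasDeriv : ∀ a, ∀ x ∈ Δ a, HasDerivWithinAt f (f' a x) (Δ a) x
  derivCont : ∀ a, ContinuousOn (f' a) (Δ a)
  derivNe : ∀ a, ∀ x ∈ Δ a, f' a x ≠ 0
  derivBdd : ∀ a, ∃ C : ℝ, ∀ x ∈ Δ a, |f' a x| ≤ C
  markov : ∀ a b, (interior (f '' Δ a ∩ Δ b)).Nonempty → Δ b ⊆ f '' Δ a

namespace MarkovMap

variable {S : Type} (M : MarkovMap S)

/-- A (nonempty) word is admissible if every transition `ω_j → ω_{j+1}` satisfies
`f(Δ_{ω_j}) ⊇ Δ_{ω_{j+1}}`. -/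
def Adm (w : List S) : Prop :=
  w ≠ [] ∧ w.Chain' fun a b => M.Δ b ⊆ M.f '' M.Δ a

/-- The cylinder `Δ_ω = ⋂_{j<n} f^{−j}(Δ_{ω_j})` of a word `ω`. -/
def cyl (w : List S) : Set ℝ :=
  {x | ∀ j : Fin w.length, M.f^[(j : ℕ)] x ∈ M.Δ (w.get j)}

/-- Uniform decay of cylinders: `sup_{ω ∈ Eⁿ} |Δ_ω| → 0` as `n → ∞`. -/
def UniformDecay : Prop :=
  ∀ ε : ℝ, 0 < ε → ∃ N : ℕ, ∀ w : List S, M.Adm w → N ≤ w.length →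
    Metric.diam (M.cyl w) < ε

/-- Finite irreducibility: there is a finite set `Λ` of words, each empty or
admissible, such that any two admissible words can be admissibly joined by some
`λ ∈ Λ`. -/
def FinIrr : Prop :=
  ∃ Λ : Finset (List S), (∀ l ∈ Λ, l = [] ∨ M.Adm l) ∧
    ∀ w v : List S, M.Adm w → M.Adm v → ∃ l ∈ Λ, M.Adm (w ++ l ++ v)

/-- `f` is non-uniformly expanding: `|f'| > 1` everywhere except at finitely many
pairs `(a, x_a)` with `x_a ∈ Δ_a` and `|f_a'(x_a)| = 1`. -/
def NonUnifExp : Prop :=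
  ∃ N : Set (S × ℝ), N.Finite ∧
    (∀ p ∈ N, p.2 ∈ M.Δ p.1 ∧ |M.f' p.1 p.2| = 1) ∧
    ∀ a, ∀ x ∈ M.Δ a, (a, x) ∉ N → 1 < |M.f' a x|

/-- Birkhoff sum `S_n φ = Σ_{j<n} φ ∘ f^j`. -/
noncomputable def birk (φ : ℝ → ℝ) (n : ℕ) (x : ℝ) : ℝ :=
  ∑ j ∈ Finset.range n, φ (M.f^[j] x)

/-- `φ` belongs to the class `𝓕`: there is a bound `D n` on `S_nφ(x) − S_nφ(y)`
over pairs `x, y` in a common `n`-cylinder (in particular `D_1(φ) < ∞`), with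
`D n / n → 0` (i.e. `D_n(φ) = o(n)`). -/
def MemF (φ : ℝ → ℝ) : Prop :=
  ∃ D : ℕ → ℝ,
    (∀ w : List S, M.Adm w → ∀ x ∈ M.cyl w, ∀ y ∈ M.cyl w,
      M.birk φ w.length x - M.birk φ w.length y ≤ D w.length) ∧
    Tendsto (fun n : ℕ => D n / n) atTop (nhds 0)

/-- The Birkhoff sum of `log |f'|` along a word, using the branch derivatives. -/
noncomputable def logDerivSum (w : List S) (x : ℝ) : ℝ :=
  ∑ j : Fin w.length, Real.log |M.f' (w.get j) (M.f^[(j : ℕ)] x)|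

/-- Mild distortion: `log |f'| ∈ 𝓕`. -/
def MildDistortion : Prop :=
  ∃ D : ℕ → ℝ,
    (∀ w : List S, M.Adm w → ∀ x ∈ M.cyl w, ∀ y ∈ M.cyl w,
      M.logDerivSum w x - M.logDerivSum w y ≤ D w.length) ∧
    Tendsto (fun n : ℕ => D n / n) atTop (nhds 0)

/-- The maximal invariant set `J = ⋂_{n≥0} f^{−n}(Δ)`. -/
def Jset : Set ℝ := {x | ∀ n : ℕ, M.f^[n] x ∈ ⋃ a, M.Δ a}

open Classical in
/-- The function `log |f'|` on `Δ` (via a choice of branch), extended by `0`. -/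
noncomputable def logDerivFn (x : ℝ) : ℝ :=
  if h : ∃ a, x ∈ M.Δ a then Real.log |M.f' h.choose x| else 0

section Aux

lemma bounded_image (a : S) : Bornology.IsBounded (M.f '' M.Δ a) :=
  (Metric.isBounded_Icc (0:ℝ) 1).subset (by
    rintro _ ⟨x, hx, rfl⟩; exact M.maps_unit a hx)

lemma bounded_piece (a : S) : Bornology.IsBounded (M.Δ a) :=
  (Metric.isBounded_Icc (0:ℝ) 1).subset (M.subset_unit a)

lemma diam_image_le (a : S) {C : ℝ} (hC : ∀ x ∈ M.Δ a, |M.f' a x| ≤ C) :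
    Metric.diam (M.f '' M.Δ a) ≤ C * Metric.diam (M.Δ a) := by
  have hconv : Convex ℝ (M.Δ a) := (M.conn a).convex
  have h0C : 0 ≤ C := by
    obtain ⟨x, hx⟩ := M.nonempty a
    exact le_trans (abs_nonneg _) (hC x hx)
  apply Metric.diam_le_of_forall_dist_le (by positivity)
  rintro _ ⟨x, hx, rfl⟩ _ ⟨y, hy, rfl⟩
  have h1 : ‖M.f x - M.f y‖ ≤ C * ‖x - y‖ :=
    hconv.norm_image_sub_le_of_norm_hasDerivWithin_le
      (fun z hz => M.hasDeriv a z hz) (fun z hz => by simpa using hC z hz) hy hx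
  have h2 : dist x y ≤ Metric.diam (M.Δ a) :=
    Metric.dist_le_diam_of_mem (M.bounded_piece a) hx hy
  calc dist (M.f x) (M.f y) = ‖M.f x - M.f y‖ := by rw [Real.dist_eq]; rfl
    _ ≤ C * ‖x - y‖ := h1
    _ = C * dist x y := by rw [Real.dist_eq]; rfl
    _ ≤ C * Metric.diam (M.Δ a) := by nlinarith

/-- Along an admissible chain with uniformly bounded derivatives, the diameter of the
first piece is at most `K^(n-1)` smaller than that of the last. -/
lemma chain_diam (K : ℝ) (hK : 1 ≤ K) :
    ∀ (v : List S), v.Chain' (fun a b => M.Δ b ⊆ M.f '' M.Δ a) →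
      (∀ t ∈ v, ∀ x ∈ M.Δ t, |M.f' t x| ≤ K) →
      ∀ (hne : v ≠ []),
      Metric.diam (M.Δ (v.getLast hne)) ≤
        K ^ (v.length - 1) * Metric.diam (M.Δ (v.head hne)) := by
  intro v
  induction v with
  | nil => intro _ _ h; exact absurd rfl h
  | cons t r ih =>
    intro hch hbd hne
    cases r with
    | nil => simp
    | cons t' r' =>
      obtain ⟨hsub, hch'⟩ := List.isChain_cons_cons.mp hch
      have hbd' : ∀ s ∈ t' :: r', ∀ x ∈ M.Δ s, |M.f' s x| ≤ K := by
        intro s hs; exact hbd s (List.mem_cons_of_mem _ hs)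
      have hIH := ih hch' hbd' (by simp)
      have hlast : (t :: t' :: r').getLast hne = (t' :: r').getLast (by simp) :=
        List.getLast_cons _
      rw [hlast]
      have hK0 : (0:ℝ) ≤ K := le_trans zero_le_one hK
      have hpow : (0:ℝ) ≤ K ^ r'.length := pow_nonneg hK0 _
      have h1 : Metric.diam (M.Δ t') ≤ K * Metric.diam (M.Δ t) := by
        have := Metric.diam_mono hsub (M.bounded_image t)
        have h2 := M.diam_image_le t (hbd t (by simp))
        linarith
      have hlen : (t :: t' :: r').length - 1 = r'.length + 1 := by simp
      rw [hlen, pow_succ, List.head_cons]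
      have hlen' : (t' :: r').length - 1 = r'.length := by simp
      rw [hlen'] at hIH
      calc Metric.diam (M.Δ ((t' :: r').getLast (by simp)))
          ≤ K ^ r'.length * Metric.diam (M.Δ ((t' :: r').head (by simp))) := hIH
        _ = K ^ r'.length * Metric.diam (M.Δ t') := rfl
        _ ≤ K ^ r'.length * (K * Metric.diam (M.Δ t)) := by
            exact mul_le_mul_of_nonneg_left h1 hpow
        _ = K ^ r'.length * K * Metric.diam (M.Δ t) := by ring

/-- The image of the cylinder of an admissible word under `f^[n]` contains the image
of the last piece under `f`. -/
lemma image_last_subset :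
    ∀ (w : List S) (hne : w ≠ []),
      w.Chain' (fun a b => M.Δ b ⊆ M.f '' M.Δ a) →
      M.f '' M.Δ (w.getLast hne) ⊆ M.f^[w.length] '' M.cyl w := by
  intro w
  induction w with
  | nil => intro h; exact absurd rfl h
  | cons a r ih =>
    intro hne hch
    cases r with
    | nil =>
      rintro y ⟨x, hx, rfl⟩
      refine ⟨x, ?_, by simp⟩
      intro j
      rcases j with ⟨j, hjlt⟩
      have hj0 : j = 0 := by simpa using Nat.lt_one_iff.mp (by simpa using hjlt)
      subst hj0
      simpa using hx
    | cons a' r' =>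
      obtain ⟨hsub, hch'⟩ := List.isChain_cons_cons.mp hch
      intro y hy
      rw [List.getLast_cons (by simp : (a' :: r') ≠ [])] at hy
      obtain ⟨x', hx', hfy⟩ := ih (by simp) hch' hy
      have hx'0 : x' ∈ M.Δ a' := by
        have := hx' ⟨0, by simp⟩
        simpa using this
      obtain ⟨x, hx, rfl⟩ := hsub hx'0
      refine ⟨x, ?_, ?_⟩
      · intro j
        rcases j with ⟨j, hjlt⟩
        cases j with
        | zero => simpa using hx
        | succ k =>
          have hk : k < (a' :: r').length := by simpa using hjlt
          have := hx' ⟨k, hk⟩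
          simpa [Function.iterate_succ_apply] using this
      · have hlen : (a :: a' :: r').length = (a' :: r').length + 1 := rfl
        rw [hlen, Function.iterate_succ_apply]
        exact hfy

lemma iter_image_bounded (w : List S) (hne : w ≠ []) :
    Bornology.IsBounded (M.f^[w.length] '' M.cyl w) := by
  apply (Metric.isBounded_Icc (0:ℝ) 1).subset
  rintro _ ⟨x, hx, rfl⟩
  have hpos : 0 < w.length := List.length_pos_iff.mpr hne
  have hk : w.length - 1 < w.length := by omega
  have hmem := hx ⟨w.length - 1, hk⟩
  have hiter : M.f^[w.length] x = M.f (M.f^[w.length - 1] x) := by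
    conv_lhs => rw [show w.length = (w.length - 1) + 1 by omega]
    rw [Function.iterate_succ_apply']
  rw [hiter]
  exact M.maps_unit _ hmem

end Aux

end MarkovMap

/-- **Uniform lower bound on images of cylinders** (Lemma 4.6). Let `f` be a finitely
irreducible non-uniformly expanding Markov map such that some partition element `Δ_b`
has nonempty interior. Then `inf_{ω ∈ E*} diam (f^{|ω|}(Δ_ω)) > 0`; equivalently
`inf_{a ∈ S} diam (f(Δ_a)) > 0`. -/
theorem inf_diam_image_of_cylinders_pos
    {S : Type} [Countable S] (M : MarkovMap S)
    (hFI : M.FinIrr) (hNE : M.NonUnifExp)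
    (b : S) (hb : (interior (M.Δ b)).Nonempty) :
    ∃ c : ℝ, 0 < c ∧
      (∀ w : List S, M.Adm w → c ≤ Metric.diam (M.f^[w.length] '' M.cyl w)) ∧
      (∀ a : S, c ≤ Metric.diam (M.f '' M.Δ a)) := by
  classical
  obtain ⟨Λ, hΛmem, hΛjoin⟩ := hFI
  -- the finite set of letters occurring in `Λ`, together with `b`
  set T : Finset S := (Λ.biUnion fun l => l.toFinset) ∪ {b} with hT
  set C : S → ℝ := fun t => (M.derivBdd t).choose with hCdef
  have hC : ∀ t, ∀ x ∈ M.Δ t, |M.f' t x| ≤ C t := fun t => (M.derivBdd t).choose_spec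
  set K : ℝ := 1 + ∑ t ∈ T, |C t| with hKdef
  have hK1 : 1 ≤ K := by
    have : (0:ℝ) ≤ ∑ t ∈ T, |C t| := Finset.sum_nonneg fun t _ => abs_nonneg _
    simp [hKdef]; linarith
  have hK0 : (0:ℝ) < K := lt_of_lt_of_le one_pos hK1
  have hKT : ∀ t ∈ T, ∀ x ∈ M.Δ t, |M.f' t x| ≤ K := by
    intro t ht x hx
    have h1 : |C t| ≤ ∑ s ∈ T, |C s| :=
      Finset.single_le_sum (fun s _ => abs_nonneg (C s)) ht
    have := hC t x hx
    have h2 : C t ≤ |C t| := le_abs_self _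
    simp only [hKdef]; linarith
  set m : ℕ := Λ.sup List.length with hm
  -- `Δ b` has positive diameter
  obtain ⟨x₀, hx₀⟩ := hb
  obtain ⟨ε, hε, hball⟩ := Metric.isOpen_iff.1 isOpen_interior x₀ hx₀
  have hd : 0 < Metric.diam (M.Δ b) := by
    have h1 : x₀ + ε / 2 ∈ M.Δ b := by
      apply interior_subset; apply hball
      rw [Metric.mem_ball, Real.dist_eq]
      rw [show x₀ + ε / 2 - x₀ = ε / 2 by ring, abs_of_nonneg (by linarith)]
      linarith
    have h2 : x₀ - ε / 2 ∈ M.Δ b := by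
      apply interior_subset; apply hball
      rw [Metric.mem_ball, Real.dist_eq]
      rw [abs_of_nonpos (by linarith)]
      linarith
    have h3 : dist (x₀ + ε / 2) (x₀ - ε / 2) ≤ Metric.diam (M.Δ b) :=
      Metric.dist_le_diam_of_mem (M.bounded_piece b) h1 h2
    have h4 : dist (x₀ + ε / 2) (x₀ - ε / 2) = ε := by
      rw [Real.dist_eq]; rw [abs_of_nonneg (by linarith)]; ring
    linarith
  set d : ℝ := Metric.diam (M.Δ b) with hddef
  refine ⟨d / K ^ m, by positivity, ?_⟩
  -- the key estimate for single letters
  have key : ∀ a : S, d / K ^ m ≤ Metric.diam (M.f '' M.Δ a) := by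
    intro a
    have hAdma : M.Adm [a] := ⟨by simp, List.isChain_singleton a⟩
    have hAdmb : M.Adm [b] := ⟨by simp, List.isChain_singleton b⟩
    obtain ⟨l, hlΛ, hadm⟩ := hΛjoin [a] [b] hAdma hAdmb
    have hform : [a] ++ l ++ [b] = a :: (l ++ [b]) := by simp
    rw [hform] at hadm
    obtain ⟨-, hch⟩ := hadm
    -- split off the head of `l ++ [b]`
    obtain ⟨t, u', hu⟩ : ∃ t u', l ++ [b] = t :: u' := by
      cases h : l ++ [b] with
      | nil => exact absurd h (by simp)
      | cons t u' => exact ⟨t, u', rfl⟩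
    rw [hu] at hch
    obtain ⟨hsub, hch'⟩ := List.isChain_cons_cons.mp hch
    -- all letters of `l ++ [b]` lie in `T`
    have hlet : ∀ s ∈ t :: u', ∀ x ∈ M.Δ s, |M.f' s x| ≤ K := by
      intro s hs
      rw [← hu] at hs
      rcases List.mem_append.mp hs with h | h
      · exact hKT s (Finset.mem_union_left _
          (Finset.mem_biUnion.mpr ⟨l, hlΛ, List.mem_toFinset.mpr h⟩))
      · have hsb : s = b := by simpa using h
        rw [hsb]
        exact hKT b (Finset.mem_union_right _ (by simp))
    -- the last letter of `l ++ [b]` is `b`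
    have hlastb : (t :: u').getLast (by simp) = b := by
      have h9 : (t :: u').getLast? = some b := by
        rw [← hu]; simp
      rw [List.getLast?_eq_getLast (by simp)] at h9
      exact Option.some.inj h9
    have hchain := M.chain_diam K hK1 (t :: u') hch' hlet (by simp)
    rw [hlastb] at hchain
    -- length bound
    have hlenle : (t :: u').length - 1 ≤ m := by
      have : (t :: u').length = l.length + 1 := by
        rw [← hu]; simp
      have hlm : l.length ≤ m := Finset.le_sup hlΛ
      omega
    have hpowle : K ^ ((t :: u').length - 1) ≤ K ^ m :=
      pow_le_pow_right₀ hK1 hlenle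
    have hdiamt : 0 ≤ Metric.diam (M.Δ ((t :: u').head (by simp))) := Metric.diam_nonneg
    have h5 : d ≤ K ^ m * Metric.diam (M.Δ ((t :: u').head (by simp))) := by
      calc d ≤ K ^ ((t :: u').length - 1) * Metric.diam (M.Δ ((t :: u').head (by simp))) := hchain
        _ ≤ K ^ m * Metric.diam (M.Δ ((t :: u').head (by simp))) :=
            mul_le_mul_of_nonneg_right hpowle hdiamt
    have h6 : Metric.diam (M.Δ t) ≤ Metric.diam (M.f '' M.Δ a) :=
      Metric.diam_mono hsub (M.bounded_image a)
    have h7 : d / K ^ m ≤ Metric.diam (M.Δ t) := by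
      rw [div_le_iff₀ (by positivity)]
      have : Metric.diam (M.Δ ((t :: u').head (by simp))) = Metric.diam (M.Δ t) := rfl
      rw [this] at h5
      linarith
    linarith
  refine ⟨?_, key⟩
  intro w hw
  obtain ⟨hne, hch⟩ := hw
  have hsub := M.image_last_subset w hne hch
  have hbd := M.iter_image_bounded w hne
  have := Metric.diam_mono hsub hbd
  have hkey := key (w.getLast hne)
  linarith
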